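/- Let κ be an infinite cardinal, identified with the set of ordinals below κ, let K = {A ⊆ κ : |A| < κ}, and fix x < κ. Let U_{≥x} = {A ⊆ κ : A ≠ ∅ and min A = x}. Then there is a bijection from 𝒫(κ) onto U_{≥x} that is an asymorphism from the ballean C(κ,K) onto the subballean of exp(κ_K) on U_{≥x}. -/

import Mathlib

open Set Cardinal

universe u v

variable {X : Type*} {Y : Type*} {P : Type*} {Q : Type*}

/-- The ball around a set: `B(A, r) = ⋃_{y ∈ A} B(y, r)`. -/
def ballSet (B : X → P → Set X) (A : Set X) (r : P) : Set X := ⋃ y ∈ A, B y r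

/-- `B : X → P → Set X` is the ball structure of a ballean with support `X` and radii `P`. -/
def IsBalleanBall (B : X → P → Set X) : Prop :=
  Nonempty P ∧ (∀ x r, x ∈ B x r) ∧ (∀ x y r, x ∈ B y r ↔ y ∈ B x r) ∧
    (∀ r s, ∃ t, ∀ x, ballSet B (B x r) s ⊆ B x t)

/-- A map between balleans is coarse. -/
def IsCoarse (BX : X → P → Set X) (BY : Y → Q → Set Y) (f : X → Y) : Prop :=
  ∀ r, ∃ s, ∀ x, f '' BX x r ⊆ BY (f x) s

/-- A map between balleans is effectively proper. -/
def IsEffectivelyProper (BX : X → P → Set X) (BY : Y → Q → Set Y) (f : X → Y) : Prop :=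
  ∀ s, ∃ r, ∀ x, f ⁻¹' BY (f x) s ⊆ BX x r

/-- A coarse embedding is a map that is both coarse and effectively proper. -/
def IsCoarseEmbedding (BX : X → P → Set X) (BY : Y → Q → Set Y) (f : X → Y) : Prop :=
  IsCoarse BX BY f ∧ IsEffectivelyProper BX BY f

/-- An asymorphism is a bijective map that is both coarse and effectively proper. -/
def IsAsymorphism (BX : X → P → Set X) (BY : Y → Q → Set Y) (f : X → Y) : Prop :=
  Function.Bijective f ∧ IsCoarse BX BY f ∧ IsEffectivelyProper BX BY f

/-- A subset of a ballean is bounded. -/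
def IsBoundedSet (B : X → P → Set X) (A : Set X) : Prop :=
  A = ∅ ∨ ∃ r, ∀ y ∈ A, A ⊆ B y r

/-- A subset of a ballean is large. -/
def IsLargeSet (B : X → P → Set X) (A : Set X) : Prop :=
  ∃ r, ballSet B A r = Set.univ

/-- A subset of a ballean is thick. -/
def IsThickSet (B : X → P → Set X) (A : Set X) : Prop :=
  ∀ r, ∃ x ∈ A, B x r ⊆ A

/-- A subset of a ballean is thin. -/
def IsThinSet (B : X → P → Set X) (A : Set X) : Prop :=
  ∀ r, ∃ V : Set X, IsBoundedSet B V ∧ ∀ x ∈ A \ V, B x r ∩ A = {x}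

/-- A `{0,1}`-valued function on a ballean is slowly oscillating. -/
def IsSlowlyOscillating (B : X → P → Set X) (f : X → Bool) : Prop :=
  ∀ r, ∃ V : Set X, IsBoundedSet B V ∧ ∀ x, x ∉ V → ∀ y ∈ B x r, ∀ z ∈ B x r, f y = f z

/-- A ballean is connected. -/
def IsConnectedBall (B : X → P → Set X) : Prop := ∀ x y, ∃ r, y ∈ B x r

/-- The connected component of a point of a ballean. -/
def balleanComponent (B : X → P → Set X) (x : X) : Set X := {y | ∃ r, y ∈ B x r}

/-- The ball structure of the hyperballean `exp B`. -/
def expBall (B : X → P → Set X) : Set X → P → Set (Set X) :=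
  fun A r => {C | A ⊆ ballSet B C r ∧ C ⊆ ballSet B A r}

/-- The ball structure of the subballean on a subset `S`. -/
def subBall (B : X → P → Set X) (S : Set X) : S → P → Set S :=
  fun y r => {z | (z : X) ∈ B (y : X) r}

/-- An ideal on a set `X`: a family of subsets closed under subsets and finite unions,
containing all finite sets, and not containing `X` itself. -/
def IsIdeal (I : Set (Set X)) : Prop :=
  (∀ A ∈ I, ∀ B ⊆ A, B ∈ I) ∧ (∀ A ∈ I, ∀ B ∈ I, A ∪ B ∈ I) ∧
    (∀ A : Set X, A.Finite → A ∈ I) ∧ Set.univ ∉ I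

/-- The ball structure of the point ideal ballean `X_I`:
`B_I(x,A) = {x}` if `x ∉ A` and `B_I(x,A) = {x} ∪ A` if `x ∈ A`. -/
def pointIdealBall (I : Set (Set X)) : X → I → Set X :=
  fun x A => insert x {y | y ∈ (A : Set X) ∧ x ∈ (A : Set X)}

/-- The ball structure of the `I`-ary ballean `X_{I-ary}`: `B(x,A) = {x} ∪ A`. -/
def aryBall (I : Set (Set X)) : X → I → Set X :=
  fun x A => insert x (A : Set X)

/-- The ball structure of the ballean `C(X,I)` on `𝒫(X)`: `B_C(Z,K) = {W | Z △ W ⊆ K}`. -/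
def cBall (I : Set (Set X)) : Set X → I → Set (Set X) :=
  fun Z K => {W | symmDiff Z W ⊆ (K : Set X)}

/-- The support of the flat hyperballean `X^♭`: all nonempty bounded subsets. -/
def flatSupport (B : X → P → Set X) : Set (Set X) := {A | A.Nonempty ∧ IsBoundedSet B A}

/-- Let `κ` be an infinite cardinal (identified with the set `κ.ord.ToType` of ordinals
below `κ`), `K = {A ⊆ κ : |A| < κ}` and `x < κ`. Then there is a bijection from `𝒫(κ)` onto
`U_{≥x} = {A ⊆ κ : A ≠ ∅, min A = x}` which is an asymorphism from `C(κ,K)` onto the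
subballean of `exp(κ_K)` on `U_{≥x}`. -/

lemma ballSetPI_subset {X : Type*} (I : Set (Set X)) (A : Set X) (K : I) :
    ballSet (pointIdealBall I) A K ⊆ A ∪ (K : Set X) := by
  intro z hz
  simp only [ballSet, mem_iUnion] at hz
  obtain ⟨y, hy, hz⟩ := hz
  rcases hz with rfl | hz
  · exact Or.inl hy
  · exact Or.inr hz.1

lemma subset_ballSetPI {X : Type*} (I : Set (Set X)) (A : Set X) (K : I)
    (h : ∃ y ∈ A, y ∈ (K : Set X)) : A ∪ (K : Set X) ⊆ ballSet (pointIdealBall I) A K := by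
  obtain ⟨y₀, hy₀A, hy₀K⟩ := h
  intro z hz
  simp only [ballSet, mem_iUnion]
  rcases hz with hz | hz
  · exact ⟨z, hz, Or.inl rfl⟩
  · exact ⟨y₀, hy₀A, Or.inr ⟨hz, hy₀K⟩⟩

lemma subset_union_symmDiff' {X : Type*} (a b : Set X) : a ⊆ b ∪ (symmDiff a b) := by
  intro y hy
  by_cases hb : y ∈ b
  · exact Or.inl hb
  · exact Or.inr (by rw [Set.symmDiff_def]; exact Or.inl ⟨hy, hb⟩)

lemma symmDiff_sub' {X : Type*} {a b k : Set X} (h1 : a ⊆ b ∪ k) (h2 : b ⊆ a ∪ k) :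
    symmDiff a b ⊆ k := by
  rw [Set.symmDiff_def]
  rintro y (⟨hy, hy'⟩ | ⟨hy, hy'⟩)
  · rcases h1 hy with h | h
    · exact absurd h hy'
    · exact h
  · rcases h2 hy with h | h
    · exact absurd h hy'
    · exact h

theorem stmt11 (κ : Cardinal.{u}) (hκ : Cardinal.aleph0 ≤ κ) (x : κ.ord.ToType) :
    ∃ f : Set κ.ord.ToType → {A : Set κ.ord.ToType | IsLeast A x},
      IsAsymorphism (cBall {A : Set κ.ord.ToType | #A < κ})
        (subBall (expBall (pointIdealBall {A : Set κ.ord.ToType | #A < κ}))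
          {A : Set κ.ord.ToType | IsLeast A x}) f := by
  have hcard : #κ.ord.ToType = κ := Cardinal.mk_ord_toType κ
  have hone : (1 : Cardinal) < κ := lt_of_lt_of_le Cardinal.one_lt_aleph0 hκ
  have hIic : #(Set.Iic x) < κ := by
    have h1 : #(Set.Iio x) < κ := Cardinal.mk_Iio_ord_toType x
    have heq : Set.Iic x = insert x (Set.Iio x) := by
      ext y; simp [le_iff_lt_or_eq]
    rw [heq]
    calc #(insert x (Set.Iio x) : Set _) ≤ #(Set.Iio x) + 1 := Cardinal.mk_insert_le
      _ < κ := Cardinal.add_lt_of_lt hκ h1 hone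
  have hT : #{y : κ.ord.ToType | x < y} = κ := by
    refine le_antisymm ((Cardinal.mk_set_le _).trans_eq hcard) ?_
    by_contra h
    rw [not_le] at h
    have hsub : (Set.univ : Set κ.ord.ToType) ⊆ {y | x < y} ∪ Set.Iic x := by
      intro y _
      rcases lt_or_ge x y with h' | h'
      · exact Or.inl h'
      · exact Or.inr h'
    have h2 : κ ≤ #({y : κ.ord.ToType | x < y} ∪ Set.Iic x : Set _) := by
      calc κ = #(Set.univ : Set κ.ord.ToType) := by rw [Cardinal.mk_univ, hcard]
        _ ≤ _ := Cardinal.mk_le_mk_of_subset hsub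
    exact absurd (h2.trans (Cardinal.mk_union_le _ _))
      (not_le.mpr (Cardinal.add_lt_of_lt hκ h hIic))
  obtain ⟨e⟩ : Nonempty (κ.ord.ToType ≃ {y : κ.ord.ToType | x < y}) :=
    Cardinal.eq.mp (hcard.trans hT.symm)
  set j : κ.ord.ToType → κ.ord.ToType := fun s => (e s : κ.ord.ToType) with hj_def
  have hj : Function.Injective j := fun a b hab => e.injective (Subtype.ext hab)
  have hjx : ∀ s, x < j s := fun s => (e s).2
  have hxnot : ∀ S : Set κ.ord.ToType, x ∉ j '' S := by
    rintro S ⟨s, _, hs⟩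
    exact absurd hs (hjx s).ne'
  set f : Set κ.ord.ToType → {A : Set κ.ord.ToType | IsLeast A x} :=
    fun S => ⟨insert x (j '' S), mem_insert x _, by
      rintro y (rfl | ⟨s, _, rfl⟩)
      · exact le_refl _
      · exact le_of_lt (hjx s)⟩ with hf_def
  have hsd : ∀ S W : Set κ.ord.ToType,
      symmDiff ((f S) : Set κ.ord.ToType) ((f W) : Set κ.ord.ToType) = j '' (symmDiff S W) := by
    intro S W
    have h1 : symmDiff (insert x (j '' S)) (insert x (j '' W)) = symmDiff (j '' S) (j '' W) := by
      rw [Set.symmDiff_def, Set.symmDiff_def, Set.insert_diff_of_mem _ (mem_insert x _),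
        Set.insert_diff_of_mem _ (mem_insert x _),
        Set.diff_insert_of_notMem (hxnot S), Set.diff_insert_of_notMem (hxnot W)]
    show symmDiff (insert x (j '' S)) (insert x (j '' W)) = _
    rw [h1, ← Set.image_symmDiff hj]
  refine ⟨f, ⟨?_, ?_⟩, ?_, ?_⟩
  · -- injective
    intro S W h
    have h' : insert x (j '' S) = insert x (j '' W) := congrArg Subtype.val h
    have him : j '' S = j '' W := by
      rw [← Set.insert_diff_self_of_notMem (hxnot S),
        ← Set.insert_diff_self_of_notMem (hxnot W), h']
    exact Set.image_injective.mpr hj him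
  · -- surjective
    rintro ⟨A, hxA, hA⟩
    refine ⟨j ⁻¹' A, Subtype.ext ?_⟩
    show insert x (j '' (j ⁻¹' A)) = A
    apply Set.Subset.antisymm
    · rintro y (rfl | ⟨s, hs, rfl⟩)
      · exact hxA
      · exact hs
    · intro y hy
      rcases eq_or_lt_of_le (hA hy) with rfl | hlt
      · exact mem_insert _ _
      · refine Or.inr ⟨e.symm ⟨y, hlt⟩, ?_, ?_⟩
        · show j (e.symm ⟨y, hlt⟩) ∈ A
          simp only [hj_def, Equiv.apply_symm_apply]
          exact hy
        · show j (e.symm ⟨y, hlt⟩) = y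
          simp only [hj_def, Equiv.apply_symm_apply]
  · -- coarse
    rintro ⟨K, hK⟩
    have hK' : #(insert x (j '' K) : Set _) < κ :=
      lt_of_le_of_lt Cardinal.mk_insert_le
        (Cardinal.add_lt_of_lt hκ (lt_of_le_of_lt Cardinal.mk_image_le hK) hone)
    refine ⟨⟨insert x (j '' K), hK'⟩, ?_⟩
    rintro S _ ⟨W, hW, rfl⟩
    have hsdK : symmDiff ((f S) : Set κ.ord.ToType) ((f W) : Set κ.ord.ToType)
        ⊆ insert x (j '' K) := by
      rw [hsd]
      exact (Set.image_mono hW).trans (Set.subset_insert _ _)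
    constructor
    · refine Set.Subset.trans ?_ (subset_ballSetPI _ _ _ ⟨x, mem_insert x _, mem_insert x _⟩)
      exact (subset_union_symmDiff' _ _).trans (Set.union_subset_union_right _ hsdK)
    · refine Set.Subset.trans ?_ (subset_ballSetPI _ _ _ ⟨x, mem_insert x _, mem_insert x _⟩)
      refine (subset_union_symmDiff' _ _).trans (Set.union_subset_union_right _ ?_)
      rw [symmDiff_comm] at hsdK
      exact hsdK
  · -- effectively proper
    rintro ⟨K', hK'⟩
    refine ⟨⟨j ⁻¹' K', lt_of_le_of_lt (Cardinal.mk_preimage_of_injective j K' hj) hK'⟩, ?_⟩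
    intro S W hW
    have hW' : ((f W) : Set κ.ord.ToType) ∈
        expBall (pointIdealBall {A : Set κ.ord.ToType | #A < κ})
          ((f S) : Set κ.ord.ToType) ⟨K', hK'⟩ := hW
    obtain ⟨h1, h2⟩ := hW'
    have hsdK : symmDiff ((f S) : Set κ.ord.ToType) ((f W) : Set κ.ord.ToType) ⊆ K' :=
      symmDiff_sub' (h1.trans (ballSetPI_subset _ _ _)) (h2.trans (ballSetPI_subset _ _ _))
    rw [hsd] at hsdK
    show symmDiff S W ⊆ j ⁻¹' K'
    intro y hy
    exact hsdK ⟨y, hy, rfl⟩
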